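/- Let c ∈ ℤ^k with S̃_c ≠ ∅, let J = J_c, let W = { w ∈ ℝ^n : ⟨w, v_j⟩ = 0 for all j ∈ J }, and let k' = k − |J|. Let φ̃ : W → ℝ^{k'} be the linear map given by pairing with the v_j for j ∉ J (in increasing order of j), let π̃ : ℝ^{k'} → ℝ^{k'}/im(φ̃) be the quotient map, let ι : ℝ^{k'} → ℝ^k be the linear inclusion into the coordinates not in J (inserting 0 in the coordinates indexed by J), and let ι̃ : ℝ^{k'}/im(φ̃) → ℝ^k/im(φ) be the linear map induced by ι (well-defined since ι(im(φ̃)) ⊆ im(φ)). Then ι̃ is injective, and ι̃( π̃([0,1)^{k'}) ) equals the minimal face of Z containing p = π(c). -/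

import Mathlib

/-- The linear map `φ : ℝⁿ → ℝᵏ` given by pairing with the integer vectors `v j`. -/
noncomputable def phiMap {n k : ℕ} (v : Fin k → Fin n → ℤ) :
    (Fin n → ℝ) →ₗ[ℝ] (Fin k → ℝ) where
  toFun u := fun j => ∑ i, u i * (v j i : ℝ)
  map_add' u w := by
    funext j
    simp [add_mul, Finset.sum_add_distrib]
  map_smul' r u := by
    funext j
    simp [Finset.mul_sum, mul_assoc]

/-- The map `Φ : ℝⁿ → ℤᵏ`, `Φ(u)_j = ⌈⟨u, v_j⟩⌉`. -/
noncomputable def PhiMap {n k : ℕ} (v : Fin k → Fin n → ℤ) (u : Fin n → ℝ) : Fin k → ℤ :=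
  fun j => ⌈∑ i, u i * (v j i : ℝ)⌉

/-- The set `J_c` of indices `j` such that `⟨y, v_j⟩ ∈ ℤ` for every `y` in the lifted stratum
`S̃_c`. -/
noncomputable def Jset {n k : ℕ} (v : Fin k → Fin n → ℤ) (c : Fin k → ℤ) : Set (Fin k) :=
  {j | ∀ y ∈ {y : Fin n → ℝ | PhiMap v y = c}, ∃ m : ℤ, phiMap v y j = (m : ℝ)}

/-- The minimal face of a set `C` containing `p`: the intersection of all extreme subsets of `C`
containing `p`. -/
def minFace {V : Type*} [AddCommGroup V] [Module ℝ V] (C : Set V) (p : V) : Set V :=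
  ⋂₀ {F : Set V | IsExtreme ℝ C F ∧ p ∈ F}

lemma stiemke {d : ℕ} (T : Submodule ℝ (Fin d → ℝ))
    (hT : ∀ t ∈ T, (∀ i, 0 ≤ t i) → t = 0) :
    ∃ μ : Fin d → ℝ, (∀ i, 0 < μ i) ∧ ∀ t ∈ T, ∑ i, μ i * t i = 0 := by
  have hdisj : Disjoint (T : Set (Fin d → ℝ)) (stdSimplex ℝ (Fin d)) := by
    rw [Set.disjoint_left]
    rintro t ht ⟨hnn, hsum⟩
    have := hT t ht hnn
    rw [this] at hsum
    simp at hsum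
  obtain ⟨f, u, w, hfu, huw, hfw⟩ := geometric_hahn_banach_closed_compact
    (T.convex) (T.closed_of_finiteDimensional) (convex_stdSimplex ℝ _)
    (isCompact_stdSimplex _ _) hdisj
  have hu : 0 < u := by simpa using hfu 0 T.zero_mem
  have hf0 : ∀ t ∈ T, f t = 0 := by
    intro t ht
    by_contra h
    have h1 : f (((u + 1) / f t) • t) < u := hfu _ (T.smul_mem _ ht)
    rw [map_smul, smul_eq_mul, div_mul_cancel₀ _ h] at h1
    linarith
  refine ⟨fun i => f (Pi.single i 1), fun i => ?_, fun t ht => ?_⟩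
  · have : Pi.single i 1 ∈ stdSimplex ℝ (Fin d) := by
      constructor
      · intro j
        rcases eq_or_ne j i with rfl | h
        · simp
        · simp [Pi.single_apply, h]
      · simp
    have := hfw _ this
    linarith
  · have ht' : t = ∑ i, (t i) • (Pi.single i 1 : Fin d → ℝ) := by
      funext j
      simp [Pi.single_apply, Finset.sum_apply, mul_comm]
    calc ∑ i, f (Pi.single i 1) * t i = f t := by
          conv_rhs => rw [ht']
          rw [map_sum]
          simp [mul_comm]
      _ = 0 := hf0 t ht

variable {n k : ℕ}

lemma phiMap_apply' (v : Fin k → Fin n → ℤ) (u : Fin n → ℝ) (j : Fin k) :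
    phiMap v u j = ∑ i, u i * (v j i : ℝ) := rfl

lemma mem_strat_iff (v : Fin k → Fin n → ℤ) (c : Fin k → ℤ) (y : Fin n → ℝ) :
    PhiMap v y = c ↔ ∀ j, (c j : ℝ) - phiMap v y j ∈ Set.Ico (0:ℝ) 1 := by
  rw [funext_iff]
  refine forall_congr' fun j => ?_
  rw [PhiMap, ← phiMap_apply', Int.ceil_eq_iff]
  constructor
  · rintro ⟨h1, h2⟩; exact ⟨by linarith, by linarith⟩
  · rintro ⟨h1, h2⟩; exact ⟨by simp at h1 h2 ⊢; linarith, by simp at h1 h2 ⊢; linarith⟩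

lemma strat_coord_zero (v : Fin k → Fin n → ℤ) (c : Fin k → ℤ) {y : Fin n → ℝ}
    (hy : PhiMap v y = c) {j : Fin k} (hj : j ∈ Jset v c) :
    phiMap v y j = (c j : ℝ) := by
  obtain ⟨m, hm⟩ := hj y hy
  have h := (mem_strat_iff v c y).1 hy j
  rw [hm] at h ⊢
  obtain ⟨h1, h2⟩ := h
  have hle : m ≤ c j := by exact_mod_cast (by linarith : (m:ℝ) ≤ (c j : ℝ))
  have hlt : c j < m + 1 := by exact_mod_cast (by linarith : ((c j) : ℝ) < (m:ℝ) + 1)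
  have : m = c j := by omega
  rw [this]

lemma exists_small {k : ℕ} (P : Fin k → ℝ → Prop)
    (h : ∀ j, ∃ δ > 0, ∀ t : ℝ, 0 < t → t < δ → P j t) :
    ∃ t : ℝ, 0 < t ∧ t < 1 ∧ ∀ j, P j t := by
  choose δ hδ hP using h
  rcases isEmpty_or_nonempty (Fin k) with hk | hk
  · exact ⟨1/2, by norm_num, by norm_num, fun j => isEmptyElim j⟩
  · set m := Finset.univ.inf' Finset.univ_nonempty δ with hm
    have hm0 : 0 < m := by
      rw [hm, Finset.lt_inf'_iff]
      exact fun j _ => hδ j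
    refine ⟨min m 1 / 2, by positivity, ?_, fun j => ?_⟩
    · have : min m 1 ≤ 1 := min_le_right _ _
      linarith
    · refine hP j _ (by positivity) ?_
      have h1 : min m 1 / 2 < m := by
        have : min m 1 ≤ m := min_le_left _ _
        linarith
      exact lt_of_lt_of_le h1 (Finset.inf'_le _ (Finset.mem_univ j))

lemma exists_xstar (v : Fin k → Fin n → ℤ) (c : Fin k → ℤ)
    (hc : ({y : Fin n → ℝ | PhiMap v y = c}).Nonempty) :
    ∃ y : Fin n → ℝ, PhiMap v y = c ∧
      (∀ j ∈ Jset v c, (c j : ℝ) - phiMap v y j = 0) ∧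
      (∀ j ∉ Jset v c, 0 < (c j : ℝ) - phiMap v y j) := by
  classical
  obtain ⟨y₀, hy₀⟩ := hc
  simp only [Set.mem_setOf_eq] at hy₀
  have hch : ∀ j : Fin k, ∃ y, PhiMap v y = c ∧
      (j ∉ Jset v c → ∀ m : ℤ, phiMap v y j ≠ (m:ℝ)) := by
    intro j
    by_cases hj : j ∈ Jset v c
    · exact ⟨y₀, hy₀, fun h => absurd hj h⟩
    · have h2 := hj
      rw [Jset, Set.mem_setOf_eq] at h2
      push_neg at h2
      obtain ⟨y, hy, hm⟩ := h2
      exact ⟨y, hy, fun _ => hm⟩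
  choose g hg1 hg2 using hch
  set y' : Fin n → ℝ := ((k:ℝ)+1)⁻¹ • (y₀ + ∑ j, g j) with hy'
  have hk1 : (0:ℝ) < (k:ℝ) + 1 := by positivity
  have hlin : ∀ j, phiMap v y' j
      = ((k:ℝ)+1)⁻¹ * (phiMap v y₀ j + ∑ i, phiMap v (g i) j) := by
    intro j
    rw [hy', map_smul, map_add, map_sum]
    simp [Finset.sum_apply]
  set s : Fin k → ℝ :=
    fun j => ((c j:ℝ) - phiMap v y₀ j) + ∑ i, ((c j:ℝ) - phiMap v (g i) j) with hs
  have hrepr : ∀ j, (c j : ℝ) - phiMap v y' j = ((k:ℝ)+1)⁻¹ * s j := by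
    intro j
    rw [hlin]
    show _ = ((k:ℝ)+1)⁻¹ * (((c j:ℝ) - phiMap v y₀ j) + ∑ i, ((c j:ℝ) - phiMap v (g i) j))
    have hsum : ∑ i, ((c j:ℝ) - phiMap v (g i) j)
        = (k:ℝ) * (c j:ℝ) - ∑ i, phiMap v (g i) j := by
      rw [Finset.sum_sub_distrib, Finset.sum_const, Finset.card_univ, Fintype.card_fin,
        nsmul_eq_mul]
    rw [hsum]
    field_simp
    ring
  have htermi : ∀ (i j : Fin k), ((c j:ℝ) - phiMap v (g i) j) ∈ Set.Ico (0:ℝ) 1 :=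
    fun i j => (mem_strat_iff v c (g i)).1 (hg1 i) j
  have hs_nonneg : ∀ j, 0 ≤ s j := by
    intro j
    exact add_nonneg ((mem_strat_iff v c y₀).1 hy₀ j).1
      (Finset.sum_nonneg fun i _ => (htermi i j).1)
  have hs_lt : ∀ j, s j < (k:ℝ) + 1 := by
    intro j
    have h1 : ((c j:ℝ) - phiMap v y₀ j) < 1 := ((mem_strat_iff v c y₀).1 hy₀ j).2
    have h2 : ∑ i, ((c j:ℝ) - phiMap v (g i) j) ≤ (k:ℝ) := by
      calc ∑ i, ((c j:ℝ) - phiMap v (g i) j) ≤ ∑ _i : Fin k, (1:ℝ) :=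
            Finset.sum_le_sum fun i _ => le_of_lt (htermi i j).2
        _ = (k:ℝ) := by simp
    rw [hs]; dsimp only; linarith
  have hy'strat : PhiMap v y' = c := by
    rw [mem_strat_iff]
    intro j
    rw [hrepr]
    constructor
    · exact mul_nonneg (by positivity) (hs_nonneg j)
    · have h2 : ((k:ℝ)+1)⁻¹ * s j < ((k:ℝ)+1)⁻¹ * ((k:ℝ)+1) :=
        mul_lt_mul_of_pos_left (hs_lt j) (by positivity)
      rwa [inv_mul_cancel₀ (ne_of_gt hk1)] at h2
  refine ⟨y', hy'strat, fun j hj => ?_, fun j hj => ?_⟩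
  · rw [strat_coord_zero v c hy'strat hj, sub_self]
  · have hpos : 0 < (c j:ℝ) - phiMap v (g j) j := by
      rcases lt_or_eq_of_le (htermi j j).1 with h | h
      · exact h
      · exfalso
        exact hg2 j hj (c j) (by linarith)
    have hsumge : (c j:ℝ) - phiMap v (g j) j ≤ ∑ i, ((c j:ℝ) - phiMap v (g i) j) :=
      Finset.single_le_sum (fun i _ => (htermi i j).1) (Finset.mem_univ j)
    have hspos : 0 < s j := by
      have h0 := ((mem_strat_iff v c y₀).1 hy₀ j).1
      rw [hs]; dsimp only; linarith
    rw [hrepr]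
    exact mul_pos (by positivity) hspos

lemma nonneg_J_zero (v : Fin k → Fin n → ℤ) (c : Fin k → ℤ)
    (hc : ({y : Fin n → ℝ | PhiMap v y = c}).Nonempty) (u : Fin n → ℝ)
    (hu : ∀ j ∈ Jset v c, 0 ≤ phiMap v u j) :
    ∀ j ∈ Jset v c, phiMap v u j = 0 := by
  classical
  obtain ⟨ys, hstar, hJ0, hJpos⟩ := exists_xstar v c hc
  have hP : ∀ j, ∃ δ > 0, ∀ t : ℝ, 0 < t → t < δ →
      ((c j:ℝ) - phiMap v ys j) + t * phiMap v u j ∈ Set.Ico (0:ℝ) 1 := by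
    intro j
    by_cases hj : j ∈ Jset v c
    · have hb : 0 ≤ phiMap v u j := hu j hj
      refine ⟨1/(phiMap v u j + 1), by positivity, fun t ht0 htδ => ?_⟩
      rw [hJ0 j hj]
      have h1 : t * (phiMap v u j + 1) < 1 := by
        rw [one_div] at htδ
        calc t * (phiMap v u j + 1) < (phiMap v u j + 1)⁻¹ * (phiMap v u j + 1) :=
              mul_lt_mul_of_pos_right htδ (by positivity)
          _ = 1 := inv_mul_cancel₀ (by positivity)
      constructor
      · have := mul_nonneg ht0.le hb; linarith
      · nlinarith
    · set a := (c j:ℝ) - phiMap v ys j with ha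
      have ha0 : 0 < a := hJpos j hj
      have ha1 : a < 1 := ((mem_strat_iff v c ys).1 hstar j).2
      set b := phiMap v u j with hbdef
      refine ⟨min a (1-a) / (|b| + 1), div_pos (lt_min ha0 (by linarith)) (by positivity), fun t ht0 htδ => ?_⟩
      have habs : |t * b| < min a (1-a) := by
        rw [abs_mul, abs_of_pos ht0]
        calc t * |b| ≤ t * (|b| + 1) := by nlinarith [abs_nonneg b]
          _ < (min a (1-a) / (|b| + 1)) * (|b| + 1) :=
              mul_lt_mul_of_pos_right htδ (by positivity)
          _ = min a (1-a) := div_mul_cancel₀ _ (by positivity)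
      rw [abs_lt] at habs
      have hm1 : min a (1-a) ≤ a := min_le_left _ _
      have hm2 : min a (1-a) ≤ 1 - a := min_le_right _ _
      exact ⟨by linarith [habs.1], by linarith [habs.2]⟩
  obtain ⟨t, ht0, _, hPt⟩ := exists_small _ hP
  have hsub : ∀ j, phiMap v (ys - t • u) j = phiMap v ys j - t * phiMap v u j := by
    intro j
    rw [map_sub, map_smul]
    simp
  have hmem : PhiMap v (ys - t • u) = c := by
    rw [mem_strat_iff]
    intro j
    obtain ⟨h1, h2⟩ := hPt j
    rw [hsub]
    exact ⟨by linarith, by linarith⟩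
  intro j hj
  have h1 := strat_coord_zero v c hmem hj
  have h2 := strat_coord_zero v c hstar hj
  rw [hsub, h2] at h1
  have h3 : t * phiMap v u j = 0 := by linarith
  exact (mul_eq_zero.mp h3).resolve_left (ne_of_gt ht0)

lemma exists_lam (v : Fin k → Fin n → ℤ) (c : Fin k → ℤ)
    (hc : ({y : Fin n → ℝ | PhiMap v y = c}).Nonempty) :
    ∃ lam : Fin k → ℝ, (∀ j ∈ Jset v c, 0 < lam j) ∧ (∀ j ∉ Jset v c, lam j = 0) ∧
      ∀ u : Fin n → ℝ, ∑ j, lam j * phiMap v u j = 0 := by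
  classical
  set ρ : (Fin k → ℝ) →ₗ[ℝ] (Fin k → ℝ) :=
    LinearMap.pi (fun j => if j ∈ Jset v c then LinearMap.proj j else 0) with hρdef
  have hρ : ∀ (x : Fin k → ℝ) j, ρ x j = if j ∈ Jset v c then x j else 0 := by
    intro x j
    rw [hρdef, LinearMap.pi_apply]
    split_ifs <;> simp
  set T := Submodule.map ρ (LinearMap.range (phiMap v)) with hTdef
  have hT : ∀ t ∈ T, (∀ i, 0 ≤ t i) → t = 0 := by
    rintro t ht hnn
    rw [hTdef, Submodule.mem_map] at ht
    obtain ⟨m, hm, rfl⟩ := ht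
    obtain ⟨u, rfl⟩ := LinearMap.mem_range.mp hm
    have hz := nonneg_J_zero v c hc u (fun j hj => by
      have := hnn j; rwa [hρ, if_pos hj] at this)
    funext j
    rw [hρ]
    split_ifs with h
    · exact hz j h
    · rfl
  obtain ⟨μ, hμpos, hμ⟩ := stiemke T hT
  refine ⟨fun j => if j ∈ Jset v c then μ j else 0, fun j hj => ?_, fun j hj => ?_, fun u => ?_⟩
  · dsimp only; rw [if_pos hj]; exact hμpos j
  · dsimp only; rw [if_neg hj]
  · have hmem : ρ (phiMap v u) ∈ T := Submodule.mem_map_of_mem (LinearMap.mem_range.mpr ⟨u, rfl⟩)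
    have h0 := hμ _ hmem
    calc ∑ j, (if j ∈ Jset v c then μ j else 0) * phiMap v u j
        = ∑ j, μ j * ρ (phiMap v u) j := by
          refine Finset.sum_congr rfl fun j _ => ?_
          rw [hρ]
          split_ifs with h <;> simp
      _ = 0 := h0

lemma iota_apply_e (v : Fin k → Fin n → ℤ) (c : Fin k → ℤ) {k' : ℕ}
    (e : Fin k' ≃o {j : Fin k // j ∉ Jset v c}) (x : Fin k' → ℝ) (j₀ : Fin k') :
    (∑ j' : Fin k', (LinearMap.single ℝ (fun _ : Fin k => ℝ)
        ((e j' : {j : Fin k // j ∉ Jset v c}) : Fin k)).comp (LinearMap.proj j')) x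
      ((e j₀ : {j : Fin k // j ∉ Jset v c}) : Fin k) = x j₀ := by
  rw [LinearMap.sum_apply, Finset.sum_apply]
  rw [Finset.sum_eq_single j₀]
  · simp
  · intro j' _ hne
    simp only [LinearMap.comp_apply, LinearMap.coe_single, LinearMap.proj_apply]
    refine Pi.single_eq_of_ne ?_ _
    intro h
    exact hne (e.injective (Subtype.coe_injective h.symm))
  · intro h
    exact absurd (Finset.mem_univ j₀) h

lemma iota_apply_J (v : Fin k → Fin n → ℤ) (c : Fin k → ℤ) {k' : ℕ}
    (e : Fin k' ≃o {j : Fin k // j ∉ Jset v c}) (x : Fin k' → ℝ) {j : Fin k}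
    (hj : j ∈ Jset v c) :
    (∑ j' : Fin k', (LinearMap.single ℝ (fun _ : Fin k => ℝ)
        ((e j' : {j : Fin k // j ∉ Jset v c}) : Fin k)).comp (LinearMap.proj j')) x j = 0 := by
  rw [LinearMap.sum_apply, Finset.sum_apply]
  refine Finset.sum_eq_zero fun j' _ => ?_
  simp only [LinearMap.comp_apply, LinearMap.coe_single, LinearMap.proj_apply]
  refine Pi.single_eq_of_ne ?_ _
  intro h
  exact (e j').2 (h ▸ hj)

lemma iota_eq_of (v : Fin k → Fin n → ℤ) (c : Fin k → ℤ) {k' : ℕ}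
    (e : Fin k' ≃o {j : Fin k // j ∉ Jset v c}) (a : Fin k → ℝ)
    (ha : ∀ j ∈ Jset v c, a j = 0) :
    (∑ j' : Fin k', (LinearMap.single ℝ (fun _ : Fin k => ℝ)
        ((e j' : {j : Fin k // j ∉ Jset v c}) : Fin k)).comp (LinearMap.proj j'))
      (fun j' => a ((e j' : {j : Fin k // j ∉ Jset v c}) : Fin k)) = a := by
  funext j
  by_cases hj : j ∈ Jset v c
  · rw [iota_apply_J v c e _ hj, ha j hj]
  · have hrw : j = ((e (e.symm ⟨j, hj⟩) : {j : Fin k // j ∉ Jset v c}) : Fin k) := by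
      rw [e.apply_symm_apply]
    conv_lhs => rw [hrw]
    rw [iota_apply_e v c e]
    rw [e.apply_symm_apply]

/-- Restricting the construction to `W = {w : ⟨w, v_j⟩ = 0 ∀ j ∈ J_c}`, with `φ̃` the pairing
with the `v_j` for `j ∉ J_c` (in increasing order, via the order isomorphism `e`), `π̃` the
projection onto `coker φ̃`, `ι` the inclusion of `ℝ^{k'}` into the coordinates not in `J_c`, and
`ι̃` the induced map on cokernels: `ι̃` is injective and `ι̃(π̃([0,1)^{k'}))` is the minimal face
of `Z` containing `p = π(c)`. -/
theorem stmt12 {n k k' : ℕ} (v : Fin k → Fin n → ℤ) (c : Fin k → ℤ)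
    (hc : ({y : Fin n → ℝ | PhiMap v y = c}).Nonempty)
    (e : Fin k' ≃o {j : Fin k // j ∉ Jset v c})
    (hk' : k' = k - (Jset v c).ncard) :
    let J := Jset v c
    let W : Submodule ℝ (Fin n → ℝ) :=
      ⨅ j ∈ J, LinearMap.ker ((LinearMap.proj j).comp (phiMap v))
    let φt : ↥W →ₗ[ℝ] (Fin k' → ℝ) :=
      ((LinearMap.funLeft ℝ ℝ (fun j' => ((e j' : {j : Fin k // j ∉ J}) : Fin k))).comp
        (phiMap v)).domRestrict W
    let ι : (Fin k' → ℝ) →ₗ[ℝ] (Fin k → ℝ) :=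
      ∑ j' : Fin k',
        (LinearMap.single ℝ (fun _ : Fin k => ℝ)
          ((e j' : {j : Fin k // j ∉ J}) : Fin k)).comp (LinearMap.proj j')
    ∀ hcomp : LinearMap.range φt ≤ (LinearMap.range (phiMap v)).comap ι,
      Function.Injective (Submodule.mapQ (LinearMap.range φt) (LinearMap.range (phiMap v))
        ι hcomp) ∧
      (Submodule.mapQ (LinearMap.range φt) (LinearMap.range (phiMap v)) ι hcomp) ''
          ((LinearMap.range φt).mkQ '' {x : Fin k' → ℝ | ∀ j', x j' ∈ Set.Ico (0 : ℝ) 1}) =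
        minFace
          ((LinearMap.range (phiMap v)).mkQ '' {x : Fin k → ℝ | ∀ j, x j ∈ Set.Ico (0 : ℝ) 1})
          ((LinearMap.range (phiMap v)).mkQ (fun j => (c j : ℝ))) := by
  classical
  intro J W φt ι hcomp
  have hiota_e : ∀ (x : Fin k' → ℝ) (j₀ : Fin k'),
      ι x ((e j₀ : {j : Fin k // j ∉ Jset v c}) : Fin k) = x j₀ :=
    fun x j₀ => iota_apply_e v c e x j₀
  have hiota_J : ∀ (x : Fin k' → ℝ) (j : Fin k), j ∈ Jset v c → ι x j = 0 :=
    fun x j hj => iota_apply_J v c e x hj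
  have hiota_eq : ∀ (a : Fin k → ℝ), (∀ j ∈ Jset v c, a j = 0) →
      ι (fun j' => a ((e j' : {j : Fin k // j ∉ Jset v c}) : Fin k)) = a :=
    fun a ha => iota_eq_of v c e a ha
  have hπeq : ∀ a b : Fin k → ℝ, (LinearMap.range (phiMap v)).mkQ a
      = (LinearMap.range (phiMap v)).mkQ b ↔ a - b ∈ LinearMap.range (phiMap v) := by
    intro a b
    rw [Submodule.mkQ_apply, Submodule.mkQ_apply, Submodule.Quotient.eq]
  constructor
  · -- injectivity
    rw [← LinearMap.ker_eq_bot, eq_bot_iff]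
    intro q hq
    obtain ⟨x', rfl⟩ := Submodule.Quotient.mk_surjective _ q
    rw [LinearMap.mem_ker, Submodule.mapQ_apply] at hq
    have hmem : ι x' ∈ LinearMap.range (phiMap v) := (Submodule.Quotient.mk_eq_zero _).mp hq
    obtain ⟨u, hu⟩ := hmem
    have huW : u ∈ W := by
      simp only [W, Submodule.mem_iInf]
      intro j hj
      rw [LinearMap.mem_ker]
      show phiMap v u j = 0
      rw [congrFun hu j]
      exact hiota_J x' j hj
    have hx' : φt ⟨u, huW⟩ = x' := by
      funext j'
      show phiMap v u ((e j' : {j : Fin k // j ∉ Jset v c}) : Fin k) = x' j'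
      rw [congrFun hu _]
      exact hiota_e x' j'
    rw [Submodule.mem_bot, Submodule.Quotient.mk_eq_zero]
    exact ⟨⟨u, huW⟩, hx'⟩
  · -- image equality
    obtain ⟨lam, hlam_pos, hlam0, hlam⟩ := exists_lam v c hc
    have hlam_nn : ∀ j, 0 ≤ lam j := by
      intro j
      by_cases hj : j ∈ Jset v c
      · exact (hlam_pos j hj).le
      · rw [hlam0 j hj]
    obtain ⟨ys, hys, hysJ, hyspos⟩ := exists_xstar v c hc
    set xs : Fin k → ℝ := fun j => (c j : ℝ) - phiMap v ys j with hxsdef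
    have hxs_cube : ∀ j, xs j ∈ Set.Ico (0:ℝ) 1 := (mem_strat_iff v c ys).1 hys
    set Fset : Set (Fin k → ℝ) :=
      {a | (∀ j, a j ∈ Set.Ico (0:ℝ) 1) ∧ ∀ j ∈ Jset v c, a j = 0} with hFdef
    have hxsF : xs ∈ Fset := ⟨hxs_cube, fun j hj => hysJ j hj⟩
    have hπxs : (LinearMap.range (phiMap v)).mkQ xs
        = (LinearMap.range (phiMap v)).mkQ (fun j => (c j : ℝ)) := by
      rw [hπeq]
      refine ⟨-ys, ?_⟩
      rw [map_neg]
      funext j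
      simp [hxsdef]
    -- the candidate face
    have hLHS : (Submodule.mapQ (LinearMap.range φt) (LinearMap.range (phiMap v)) ι hcomp) ''
        ((LinearMap.range φt).mkQ '' {x : Fin k' → ℝ | ∀ j', x j' ∈ Set.Ico (0 : ℝ) 1})
        = (LinearMap.range (phiMap v)).mkQ '' Fset := by
      rw [Set.image_image]
      ext q
      constructor
      · rintro ⟨x', hx', rfl⟩
        refine ⟨ι x', ⟨fun j => ?_, fun j hj => hiota_J x' j hj⟩, ?_⟩
        · by_cases hj : j ∈ Jset v c
          · rw [hiota_J x' j hj]
            exact ⟨le_refl _, zero_lt_one⟩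
          · have hrw : j = ((e (e.symm ⟨j, hj⟩) : {j : Fin k // j ∉ Jset v c}) : Fin k) := by
              rw [e.apply_symm_apply]
            rw [hrw, hiota_e]
            exact hx' _
        · simp only [Submodule.mkQ_apply, Submodule.mapQ_apply]
      · rintro ⟨a, ⟨ha1, ha2⟩, rfl⟩
        refine ⟨fun j' => a ((e j' : {j : Fin k // j ∉ Jset v c}) : Fin k),
          fun j' => ha1 _, ?_⟩
        simp only [Submodule.mkQ_apply, Submodule.mapQ_apply]
        rw [hiota_eq a ha2]
    rw [hLHS]
    -- linear functional facts
    have hl_F : ∀ a ∈ Fset, ∑ j, lam j * a j = 0 := by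
      rintro a ⟨ha1, ha2⟩
      refine Finset.sum_eq_zero fun j _ => ?_
      by_cases hj : j ∈ Jset v c
      · rw [ha2 j hj, mul_zero]
      · rw [hlam0 j hj, zero_mul]
    have hl_nonneg : ∀ a : Fin k → ℝ, (∀ j, a j ∈ Set.Ico (0:ℝ) 1) →
        0 ≤ ∑ j, lam j * a j :=
      fun a ha => Finset.sum_nonneg fun j _ => mul_nonneg (hlam_nn j) (ha j).1
    have hl_zero_imp : ∀ a : Fin k → ℝ, (∀ j, a j ∈ Set.Ico (0:ℝ) 1) →
        (∑ j, lam j * a j = 0) → a ∈ Fset := by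
      intro a ha h0
      refine ⟨ha, fun j hj => ?_⟩
      have := (Finset.sum_eq_zero_iff_of_nonneg
        (fun j _ => mul_nonneg (hlam_nn j) (ha j).1)).mp h0 j (Finset.mem_univ j)
      rcases mul_eq_zero.mp this with h | h
      · exact absurd h (ne_of_gt (hlam_pos j hj))
      · exact h
    have hE0_sub : (LinearMap.range (phiMap v)).mkQ '' Fset ⊆
        (LinearMap.range (phiMap v)).mkQ '' {x : Fin k → ℝ | ∀ j, x j ∈ Set.Ico (0 : ℝ) 1} :=
      Set.image_mono (fun a ha => ha.1)
    have hextreme : IsExtreme ℝ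
        ((LinearMap.range (phiMap v)).mkQ '' {x : Fin k → ℝ | ∀ j, x j ∈ Set.Ico (0 : ℝ) 1})
        ((LinearMap.range (phiMap v)).mkQ '' Fset) := by
      refine ⟨hE0_sub, ?_⟩
      rintro z1 ⟨a, ha, rfl⟩ z2 ⟨b, hb, rfl⟩ w ⟨x, hxF, rfl⟩ hseg
      obtain ⟨t1, t2, ht1, ht2, htsum, heq⟩ := hseg
      have heq2 : (LinearMap.range (phiMap v)).mkQ (t1 • a + t2 • b)
          = (LinearMap.range (phiMap v)).mkQ x := by
        rw [map_add, map_smul, map_smul]; exact heq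
      rw [hπeq] at heq2
      obtain ⟨u, hu⟩ := heq2
      have h1 : ∑ j, lam j * (t1 * a j + t2 * b j - x j) = 0 := by
        calc ∑ j, lam j * (t1 * a j + t2 * b j - x j)
            = ∑ j, lam j * phiMap v u j := by
              refine Finset.sum_congr rfl fun j _ => ?_
              have := congrFun hu j
              simp only [Pi.sub_apply, Pi.add_apply, Pi.smul_apply, smul_eq_mul] at this
              rw [this]
          _ = 0 := hlam u
      have hexp : ∑ j, lam j * (t1 * a j + t2 * b j - x j)
          = t1 * (∑ j, lam j * a j) + t2 * (∑ j, lam j * b j) - ∑ j, lam j * x j := by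
        rw [Finset.mul_sum, Finset.mul_sum, ← Finset.sum_add_distrib, ← Finset.sum_sub_distrib]
        refine Finset.sum_congr rfl fun j _ => by ring
      have hx0 : ∑ j, lam j * x j = 0 := hl_F x hxF
      have hA0 : 0 ≤ ∑ j, lam j * a j := hl_nonneg a ha
      have hB0 : 0 ≤ ∑ j, lam j * b j := hl_nonneg b hb
      have hAB : t1 * (∑ j, lam j * a j) + t2 * (∑ j, lam j * b j) = 0 := by
        rw [hexp] at h1; linarith
      have h5 := mul_nonneg ht1.le hA0
      have h6 := mul_nonneg ht2.le hB0
      have h7 : t1 * (∑ j, lam j * a j) = 0 := by linarith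
      have h8 : t2 * (∑ j, lam j * b j) = 0 := by linarith
      have hA : ∑ j, lam j * a j = 0 := (mul_eq_zero.mp h7).resolve_left (ne_of_gt ht1)
      have hB : ∑ j, lam j * b j = 0 := (mul_eq_zero.mp h8).resolve_left (ne_of_gt ht2)
      exact ⟨a, hl_zero_imp a ha hA, rfl⟩
    have hpE0 : (LinearMap.range (phiMap v)).mkQ (fun j => (c j : ℝ))
        ∈ (LinearMap.range (phiMap v)).mkQ '' Fset := ⟨xs, hxsF, hπxs⟩
    refine Set.Subset.antisymm ?_ (Set.sInter_subset_of_mem ⟨hextreme, hpE0⟩)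
    -- minimality
    rintro q ⟨x, ⟨hx_cube, hxJ⟩, rfl⟩
    intro E hE
    obtain ⟨hEext, hpE⟩ := hE
    have hP : ∀ j, ∃ δ > 0, ∀ t : ℝ, 0 < t → t < δ →
        (0 ≤ xs j - t * x j ∧ xs j - t * x j < 1 - t) := by
      intro j
      by_cases hj : j ∈ Jset v c
      · refine ⟨1, one_pos, fun t ht0 ht1 => ?_⟩
        rw [hxJ j hj]
        have : xs j = 0 := hysJ j hj
        rw [this]
        constructor <;> [simp; linarith]
      · have h0 : 0 < xs j := hyspos j hj
        have h1 : xs j < 1 := (hxs_cube j).2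
        refine ⟨min (xs j) (1 - xs j), lt_min h0 (by linarith), fun t ht0 htδ => ?_⟩
        have htm1 : t < xs j := lt_of_lt_of_le htδ (min_le_left _ _)
        have htm2 : t < 1 - xs j := lt_of_lt_of_le htδ (min_le_right _ _)
        have hx0 : 0 ≤ x j := (hx_cube j).1
        have hx1 : x j < 1 := (hx_cube j).2
        constructor
        · nlinarith
        · nlinarith
    obtain ⟨t, ht0, ht1, hPt⟩ := exists_small _ hP
    set z : Fin k → ℝ := fun j => (xs j - t * x j) / (1 - t) with hzdef
    have hden : (0:ℝ) < 1 - t := by linarith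
    have hz_cube : ∀ j, z j ∈ Set.Ico (0:ℝ) 1 := by
      intro j
      obtain ⟨hz1, hz2⟩ := hPt j
      constructor
      · exact div_nonneg hz1 hden.le
      · rw [div_lt_one hden]; exact hz2
    have hcomb : t • x + (1 - t) • z = xs := by
      funext j
      simp only [Pi.add_apply, Pi.smul_apply, smul_eq_mul, hzdef]
      field_simp
      ring
    have hp_seg : (LinearMap.range (phiMap v)).mkQ (fun j => (c j : ℝ)) ∈ openSegment ℝ
        ((LinearMap.range (phiMap v)).mkQ x) ((LinearMap.range (phiMap v)).mkQ z) := by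
      refine ⟨t, 1 - t, ht0, hden, by ring, ?_⟩
      rw [← map_smul, ← map_smul, ← map_add, hcomb]
      exact hπxs
    exact (hEext.2 ⟨x, hx_cube, rfl⟩ ⟨z, hz_cube, rfl⟩ hpE hp_seg)
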